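/- arXiv:1904.01244 — 2 statements merged into one kernel-verified Lean document; each statement's English description precedes it below -/
import Mathlib

section
/- (Robust counterpart equivalence) Let Σ be an n×n real symmetric positive definite matrix, a ∈ ℝⁿ, β ≥ 0, and x ∈ ℝⁿ. Then ãᵀx ≤ 0 holds for all ã in the ellipsoidal uncertainty set U = {ã : (ã − a)ᵀΣ⁻¹(ã − a) ≤ β²} if and only if aᵀx + β√(xᵀΣx) ≤ 0. -/
open Matrix Real

private lemma dot_cs {n : ℕ} (v w : Fin n → ℝ) :
    v ⬝ᵥ w ≤ Real.sqrt (v ⬝ᵥ v) * Real.sqrt (w ⬝ᵥ w) := by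
  have h := Finset.sum_mul_sq_le_sq_mul_sq Finset.univ v w
  have hvv : 0 ≤ v ⬝ᵥ v := Finset.sum_nonneg fun i _ => mul_self_nonneg _
  have hww : 0 ≤ w ⬝ᵥ w := Finset.sum_nonneg fun i _ => mul_self_nonneg _
  have h2 : (v ⬝ᵥ w) ^ 2 ≤ (v ⬝ᵥ v) * (w ⬝ᵥ w) := by
    simpa [dotProduct, pow_two, mul_comm, mul_assoc, mul_left_comm] using h
  calc v ⬝ᵥ w ≤ |v ⬝ᵥ w| := le_abs_self _
    _ = Real.sqrt ((v ⬝ᵥ w) ^ 2) := (Real.sqrt_sq_eq_abs _).symm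
    _ ≤ Real.sqrt ((v ⬝ᵥ v) * (w ⬝ᵥ w)) := Real.sqrt_le_sqrt h2
    _ = Real.sqrt (v ⬝ᵥ v) * Real.sqrt (w ⬝ᵥ w) := Real.sqrt_mul hvv _

/-- Robust counterpart equivalence: `ãᵀx ≤ 0` for all `ã` in the ellipsoid
`U = {ã : (ã − a)ᵀ Σ⁻¹ (ã − a) ≤ β²}` iff `aᵀx + β √(xᵀ Σ x) ≤ 0`. -/
theorem robust_counterpart_equivalence {n : ℕ} (S : Matrix (Fin n) (Fin n) ℝ)
    (hS : S.PosDef) (a : Fin n → ℝ) (β : ℝ) (hβ : 0 ≤ β) (x : Fin n → ℝ) :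
    (∀ atilde : Fin n → ℝ, (atilde - a) ⬝ᵥ (S⁻¹ *ᵥ (atilde - a)) ≤ β ^ 2 → atilde ⬝ᵥ x ≤ 0)
      ↔ a ⬝ᵥ x + β * Real.sqrt (x ⬝ᵥ (S *ᵥ x)) ≤ 0 := by
  have hSdet : IsUnit S.det := isUnit_iff_ne_zero.mpr (ne_of_gt hS.det_pos)
  -- square root of S
  open scoped MatrixOrder in set B := CFC.sqrt S with hBdef
  have hBB : B * B = S := by
    open scoped MatrixOrder in exact CFC.sqrt_mul_sqrt_self S hS.posSemidef.nonneg
  have hBherm : B.IsHermitian := by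
    open scoped MatrixOrder in exact (CFC.sqrt_nonneg S).posSemidef.1
  have hBsym : Bᵀ = B := by have h := hBherm; simp at h; exact h.eq
  have hBdet : IsUnit B.det := by
    have hd : B.det * B.det = S.det := by rw [← det_mul, hBB]
    exact isUnit_iff_ne_zero.mpr fun h => (ne_of_gt hS.det_pos) (by rw [← hd, h, zero_mul])
  have hBinv : B⁻¹ * B = 1 := nonsing_inv_mul B hBdet
  have hBinvsym : (B⁻¹)ᵀ = B⁻¹ := by rw [transpose_nonsing_inv, hBsym]
  have hSinvBB : S⁻¹ = B⁻¹ * B⁻¹ := by rw [← hBB, Matrix.mul_inv_rev]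
  -- key rewrites
  have hxSx : ∀ y : Fin n → ℝ, y ⬝ᵥ (S *ᵥ y) = (B *ᵥ y) ⬝ᵥ (B *ᵥ y) := by
    intro y
    rw [← hBB, ← mulVec_mulVec, dotProduct_mulVec _ B, ← mulVec_transpose, hBsym]
  have huSu : ∀ u : Fin n → ℝ, u ⬝ᵥ (S⁻¹ *ᵥ u) = (B⁻¹ *ᵥ u) ⬝ᵥ (B⁻¹ *ᵥ u) := by
    intro u
    rw [hSinvBB, ← mulVec_mulVec, dotProduct_mulVec _ (B⁻¹), ← mulVec_transpose, hBinvsym]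
  have hux : ∀ u : Fin n → ℝ, u ⬝ᵥ x = (B⁻¹ *ᵥ u) ⬝ᵥ (B *ᵥ x) := by
    intro u
    rw [dotProduct_mulVec (B⁻¹ *ᵥ u) B x, ← mulVec_transpose, hBsym, mulVec_mulVec,
      mul_nonsing_inv B hBdet, one_mulVec]
  have hxSx_nonneg : 0 ≤ x ⬝ᵥ (S *ᵥ x) := by
    rw [hxSx]; exact Finset.sum_nonneg fun i _ => mul_self_nonneg _
  constructor
  · intro h
    by_cases hx : x = 0
    · simp [hx]
    · have hq : 0 < x ⬝ᵥ (S *ᵥ x) := by simpa using hS.dotProduct_mulVec_pos hx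
      have hsq : 0 < Real.sqrt (x ⬝ᵥ (S *ᵥ x)) := Real.sqrt_pos.mpr hq
      set c : ℝ := β / Real.sqrt (x ⬝ᵥ (S *ᵥ x)) with hcdef
      have hSx : S⁻¹ *ᵥ (S *ᵥ x) = x := by
        rw [mulVec_mulVec, nonsing_inv_mul S hSdet, one_mulVec]
      have hcq : c * (x ⬝ᵥ (S *ᵥ x)) =
          β * Real.sqrt (x ⬝ᵥ (S *ᵥ x)) := by
        calc c * (x ⬝ᵥ (S *ᵥ x))
            = β * ((x ⬝ᵥ (S *ᵥ x)) / Real.sqrt (x ⬝ᵥ (S *ᵥ x))) := by rw [hcdef]; ring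
          _ = β * Real.sqrt (x ⬝ᵥ (S *ᵥ x)) := by rw [Real.div_sqrt]
      have hcons : (a + c • (S *ᵥ x) - a) ⬝ᵥ (S⁻¹ *ᵥ (a + c • (S *ᵥ x) - a)) ≤ β ^ 2 := by
        have h1 : a + c • (S *ᵥ x) - a = c • (S *ᵥ x) := by abel
        rw [h1, mulVec_smul, hSx, smul_dotProduct, dotProduct_smul, smul_eq_mul, smul_eq_mul,
          dotProduct_comm (S *ᵥ x) x]
        have h2 : c * (c * (x ⬝ᵥ (S *ᵥ x))) = c * (β * Real.sqrt (x ⬝ᵥ (S *ᵥ x))) := by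
          rw [hcq]
        rw [h2, hcdef, div_mul_eq_mul_div, mul_div_assoc]
        rw [mul_div_assoc, div_self (ne_of_gt hsq), mul_one, pow_two]
      have hkey := h (a + c • (S *ᵥ x)) hcons
      rw [add_dotProduct, smul_dotProduct, smul_eq_mul, dotProduct_comm (S *ᵥ x) x] at hkey
      linarith [hcq]
  · intro h atilde hcons
    have h1 : atilde ⬝ᵥ x = a ⬝ᵥ x + (atilde - a) ⬝ᵥ x := by
      rw [sub_dotProduct]; ring
    have hcs : (atilde - a) ⬝ᵥ x ≤
        Real.sqrt ((atilde - a) ⬝ᵥ (S⁻¹ *ᵥ (atilde - a))) * Real.sqrt (x ⬝ᵥ (S *ᵥ x)) := by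
      rw [hux (atilde - a), huSu (atilde - a), hxSx x]
      exact dot_cs _ _
    have hle : Real.sqrt ((atilde - a) ⬝ᵥ (S⁻¹ *ᵥ (atilde - a))) ≤ β := by
      calc Real.sqrt ((atilde - a) ⬝ᵥ (S⁻¹ *ᵥ (atilde - a)))
          ≤ Real.sqrt (β ^ 2) := Real.sqrt_le_sqrt hcons
        _ = β := Real.sqrt_sq hβ
    have h3 : (atilde - a) ⬝ᵥ x ≤ β * Real.sqrt (x ⬝ᵥ (S *ᵥ x)) :=
      hcs.trans (mul_le_mul_of_nonneg_right hle (Real.sqrt_nonneg _))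
    rw [h1]
    linarith
end

section
/- (Validity of the cuts) Let Σ be an n×n real symmetric positive semidefinite matrix, a ∈ ℝⁿ, β ≥ 0, and let x_ν ∈ ℝⁿ satisfy x_νᵀΣx_ν > 0. Define the cut vector â = a + βΣx_ν/√(x_νᵀΣx_ν). Then every x ∈ ℝⁿ satisfying the robust counterpart constraint aᵀx + β√(xᵀΣx) ≤ 0 also satisfies the cut âᵀx ≤ 0. -/
open Matrix Real

open scoped MatrixOrder in
/-- Cauchy–Schwarz for a PSD bilinear form. -/
lemma psd_cauchy_schwarz {n : ℕ} {S : Matrix (Fin n) (Fin n) ℝ}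
    (hS : S.PosSemidef) (u v : Fin n → ℝ) :
    u ⬝ᵥ (S *ᵥ v) ≤ Real.sqrt (u ⬝ᵥ (S *ᵥ u)) * Real.sqrt (v ⬝ᵥ (S *ᵥ v)) := by
  have hB : (CFC.sqrt S) * (CFC.sqrt S) = S := CFC.sqrt_mul_sqrt_self S hS.nonneg
  have hherm : (CFC.sqrt S)ᵀ = (CFC.sqrt S) := by
    have := (CFC.sqrt_nonneg S).posSemidef.1
    rwa [Matrix.IsHermitian, Matrix.conjTranspose_eq_transpose_of_trivial] at this
  have key : ∀ w z : Fin n → ℝ, w ⬝ᵥ (S *ᵥ z) = ((CFC.sqrt S) *ᵥ w) ⬝ᵥ ((CFC.sqrt S) *ᵥ z) := by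
    intro w z
    have hvm : w ᵥ* (CFC.sqrt S) = (CFC.sqrt S) *ᵥ w := by
      conv_lhs => rw [← hherm]
      rw [Matrix.vecMul_transpose]
    calc w ⬝ᵥ (S *ᵥ z) = w ⬝ᵥ ((CFC.sqrt S) *ᵥ ((CFC.sqrt S) *ᵥ z)) := by
          rw [Matrix.mulVec_mulVec, hB]
      _ = ((CFC.sqrt S) *ᵥ w) ⬝ᵥ ((CFC.sqrt S) *ᵥ z) := by
          rw [Matrix.dotProduct_mulVec, hvm]
  rw [key u v, key u u, key v v]
  have := Real.sum_mul_le_sqrt_mul_sqrt Finset.univ ((CFC.sqrt S) *ᵥ u) ((CFC.sqrt S) *ᵥ v)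
  simpa [dotProduct, pow_two] using this

/-- Validity of the cuts: every `x` feasible for the robust counterpart
constraint `aᵀx + β √(xᵀ S x) ≤ 0` also satisfies the cut `âᵀx ≤ 0` generated
at any point `xν` with `xνᵀ S xν > 0`. -/
theorem cut_validity {n : ℕ} (S : Matrix (Fin n) (Fin n) ℝ)
    (hS : S.PosSemidef) (a : Fin n → ℝ) (β : ℝ) (hβ : 0 ≤ β)
    (xν : Fin n → ℝ) (hxν : 0 < xν ⬝ᵥ (S *ᵥ xν)) (x : Fin n → ℝ)
    (hx : a ⬝ᵥ x + β * Real.sqrt (x ⬝ᵥ (S *ᵥ x)) ≤ 0) :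
    (a + (β / Real.sqrt (xν ⬝ᵥ (S *ᵥ xν))) • (S *ᵥ xν)) ⬝ᵥ x ≤ 0 := by
  set q := Real.sqrt (xν ⬝ᵥ (S *ᵥ xν)) with hq
  have hq0 : 0 < q := Real.sqrt_pos.mpr hxν
  have hST : Sᵀ = S := by
    have := hS.1
    rwa [Matrix.IsHermitian, Matrix.conjTranspose_eq_transpose_of_trivial] at this
  have hvm : xν ᵥ* S = S *ᵥ xν := by
    conv_lhs => rw [← hST]
    rw [Matrix.vecMul_transpose]
  have hsym : (S *ᵥ xν) ⬝ᵥ x = xν ⬝ᵥ (S *ᵥ x) := by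
    rw [Matrix.dotProduct_mulVec, hvm]
  have hcs : xν ⬝ᵥ (S *ᵥ x) ≤ q * Real.sqrt (x ⬝ᵥ (S *ᵥ x)) :=
    psd_cauchy_schwarz hS xν x
  have expand : (a + (β / q) • (S *ᵥ xν)) ⬝ᵥ x
      = a ⬝ᵥ x + (β / q) * ((S *ᵥ xν) ⬝ᵥ x) := by
    rw [add_dotProduct, smul_dotProduct]; rfl
  rw [expand, hsym]
  have h2 : (β / q) * (xν ⬝ᵥ (S *ᵥ x)) ≤ β * Real.sqrt (x ⬝ᵥ (S *ᵥ x)) := by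
    calc (β / q) * (xν ⬝ᵥ (S *ᵥ x)) ≤ (β / q) * (q * Real.sqrt (x ⬝ᵥ (S *ᵥ x))) := by
          exact mul_le_mul_of_nonneg_left hcs (by positivity)
      _ = β * Real.sqrt (x ⬝ᵥ (S *ᵥ x)) := by field_simp
  linarith
end
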